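/- Let M ∈ ℝ^{m×n}, and let v ∈ ℝᵐ₊ \ {0}, w ∈ (ℝⁿ)ᵀ₊ \ {0} be nonnegative nonzero vectors. Then (v,w) satisfies the KKT conditions of min_{v,w ≥ 0} ||M - vw||_F² (namely v ≥ 0, (vw - M)wᵀ ≥ 0, v ∘ ((vw - M)wᵀ) = 0, and symmetrically for w) if and only if v = max(0, Mwᵀ/||w||₂²) and w = max(0, vᵀM/||v||₂²). -/

import Mathlib

lemma stmt11_aux_fwd (W A x : ℝ) (hW : 0 < W) (hx : 0 ≤ x)
    (h1 : 0 ≤ x * W - A) (h2 : x * (x * W - A) = 0) :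
    x = max 0 (A / W) := by
  rcases eq_or_lt_of_le hx with h | h
  · rw [← h, max_eq_left]
    apply div_nonpos_of_nonpos_of_nonneg _ hW.le
    nlinarith
  · have h3 : x * W - A = 0 := by
      rcases mul_eq_zero.mp h2 with h' | h'
      · linarith
      · exact h'
    have hxA : x = A / W := by
      field_simp
      linarith
    rw [hxA, max_eq_right (hxA ▸ hx)]

lemma stmt11_aux_bwd (W A x : ℝ) (hW : 0 < W) (hx : x = max 0 (A / W)) :
    0 ≤ x * W - A ∧ x * (x * W - A) = 0 := by
  rcases le_or_gt A 0 with h | h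
  · have hx0 : x = 0 := by
      rw [hx, max_eq_left (div_nonpos_of_nonpos_of_nonneg h hW.le)]
    rw [hx0]
    constructor
    · linarith
    · ring
  · have hx0 : x = A / W := by
      rw [hx, max_eq_right (div_pos h hW).le]
    rw [hx0, div_mul_cancel₀ _ hW.ne']
    simp

/-- For nonnegative nonzero v, w, the KKT conditions of
min_{v,w≥0} ‖M - vw‖_F² are equivalent to the closed-form fixed-point equations. -/
theorem stmt_11 (m n : ℕ) (M : Fin m → Fin n → ℝ)
    (v : Fin m → ℝ) (w : Fin n → ℝ)
    (hv : ∀ i, 0 ≤ v i) (hw : ∀ j, 0 ≤ w j) (hv0 : v ≠ 0) (hw0 : w ≠ 0) :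
    ((∀ i, 0 ≤ ∑ j, (v i * w j - M i j) * w j) ∧
     (∀ i, v i * (∑ j, (v i * w j - M i j) * w j) = 0) ∧
     (∀ j, 0 ≤ ∑ i, v i * (v i * w j - M i j)) ∧
     (∀ j, w j * (∑ i, v i * (v i * w j - M i j)) = 0))
    ↔
    ((∀ i, v i = max 0 ((∑ j, M i j * w j) / (∑ j, (w j) ^ 2))) ∧
     (∀ j, w j = max 0 ((∑ i, v i * M i j) / (∑ i, (v i) ^ 2)))) := by
  have hW : 0 < ∑ j, (w j) ^ 2 := by
    obtain ⟨j, hj⟩ := Function.ne_iff.mp hw0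
    exact Finset.sum_pos' (fun j _ => sq_nonneg _)
      ⟨j, Finset.mem_univ j, pow_pos (lt_of_le_of_ne (hw j) (Ne.symm hj)) 2⟩
  have hV : 0 < ∑ i, (v i) ^ 2 := by
    obtain ⟨i, hi⟩ := Function.ne_iff.mp hv0
    exact Finset.sum_pos' (fun i _ => sq_nonneg _)
      ⟨i, Finset.mem_univ i, pow_pos (lt_of_le_of_ne (hv i) (Ne.symm hi)) 2⟩
  have e1 : ∀ i, (∑ j, (v i * w j - M i j) * w j)
      = v i * (∑ j, (w j) ^ 2) - ∑ j, M i j * w j := by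
    intro i
    rw [Finset.mul_sum, ← Finset.sum_sub_distrib]
    exact Finset.sum_congr rfl fun j _ => by ring
  have e2 : ∀ j, (∑ i, v i * (v i * w j - M i j))
      = w j * (∑ i, (v i) ^ 2) - ∑ i, v i * M i j := by
    intro j
    rw [Finset.mul_sum, ← Finset.sum_sub_distrib]
    exact Finset.sum_congr rfl fun i _ => by ring
  constructor
  · rintro ⟨h1, h2, h3, h4⟩
    constructor
    · intro i
      exact stmt11_aux_fwd _ _ _ hW (hv i) (by rw [← e1 i]; exact h1 i)
        (by rw [← e1 i]; exact h2 i)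
    · intro j
      exact stmt11_aux_fwd _ _ _ hV (hw j) (by rw [← e2 j]; exact h3 j)
        (by rw [← e2 j]; exact h4 j)
  · rintro ⟨h1, h2⟩
    refine ⟨fun i => ?_, fun i => ?_, fun j => ?_, fun j => ?_⟩
    · rw [e1 i]; exact (stmt11_aux_bwd _ _ _ hW (h1 i)).1
    · rw [e1 i]; exact (stmt11_aux_bwd _ _ _ hW (h1 i)).2
    · rw [e2 j]; exact (stmt11_aux_bwd _ _ _ hV (h2 j)).1
    · rw [e2 j]; exact (stmt11_aux_bwd _ _ _ hV (h2 j)).2
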